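/- Fix an integer n ≥ 2, set d := 2n+2, and let q(n) := (1, 1, …, 1, 3n, 10n, 15n) ∈ ℤ^d (with 2n−1 entries equal to 1). Let Δ := conv{e_1, …, e_d, −q(n)} ⊆ ℝ^d. Then, as formal power series in ℤ[[X]], (1−X)^{d+1}·Ehr_Δ(X) = (1 + X² + X⁴ + ⋯ + X^{2n−2})·(1 + 7X + 14X² + 7X³ + X⁴). -/

import Mathlib

open scoped BigOperators Pointwise

/-- Ehrhart series of a (bounded) set `P ⊆ ℝ^n`: the coefficient of `X^t` is the
number of lattice points of `ℤ^n` in the dilate `t • P`. -/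
noncomputable def ehrhartSeries {n : ℕ} (P : Set (Fin n → ℝ)) : PowerSeries ℤ :=
  PowerSeries.mk fun t =>
    (Set.ncard {x : Fin n → ℤ | (fun i => (x i : ℝ)) ∈ (t : ℝ) • P} : ℤ)

/-- The vector `q(n) = (1,…,1,3n,10n,15n) ∈ ℤ^{2n+2}` with `2n-1` ones. -/
def qvec (n : ℕ) : Fin (2 * n + 2) → ℤ := fun i =>
  if (i : ℕ) < 2 * n - 1 then 1
  else if (i : ℕ) = 2 * n - 1 then 3 * n
  else if (i : ℕ) = 2 * n then 10 * n
  else 15 * n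

/-- The simplex `Δ_{(1,q(n))} = conv{e_1, …, e_d, -q(n)} ⊆ ℝ^{2n+2}`. -/
noncomputable def deltaQ (n : ℕ) : Set (Fin (2 * n + 2) → ℝ) :=
  convexHull ℝ
    ((Set.range fun i : Fin (2 * n + 2) => fun j : Fin (2 * n + 2) =>
        if j = i then (1 : ℝ) else 0) ∪
      {fun i => -(qvec n i : ℝ)})

open Finset

namespace S5

def qnat (n : ℕ) : ℕ → ℕ := fun i =>
  if i < 2 * n - 1 then 1
  else if i = 2 * n - 1 then 3 * n
  else if i = 2 * n then 10 * n
  else 15 * n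

lemma qnat_cast {n : ℕ} (i : Fin (2*n+2)) :
    ((qnat n (i:ℕ) : ℤ)) = qvec n i := by
  unfold qnat qvec
  split_ifs <;> push_cast <;> ring

/-- generic splitting of a sum over `Fin (2n+2)` of a function of `qnat`. -/
lemma sum_qnat {M : Type*} [AddCommMonoid M] {n : ℕ} (hn : 1 ≤ n) (F : ℕ → M) :
    ∑ i : Fin (2*n+2), F (qnat n (i:ℕ)) = (2*n-1) • F 1 + (F (3*n) + F (10*n) + F (15*n)) := by
  have h1 : ∑ i : Fin (2*n+2), F (qnat n (i:ℕ)) = ∑ i ∈ range (2*n+2), F (qnat n i) :=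
    Fin.sum_univ_eq_sum_range (fun i => F (qnat n i)) (2*n+2)
  have h2 : 2*n+2 = (2*n-1) + 1 + 1 + 1 := by omega
  rw [h1, h2, sum_range_succ, sum_range_succ, sum_range_succ]
  have e1 : qnat n (2*n-1) = 3*n := by
    unfold qnat; rw [if_neg (by omega), if_pos rfl]
  have e2 : qnat n (2*n-1+1) = 10*n := by
    unfold qnat; rw [if_neg (by omega), if_neg (by omega), if_pos (by omega)]
  have e3 : qnat n (2*n-1+1+1) = 15*n := by
    unfold qnat; rw [if_neg (by omega), if_neg (by omega), if_neg (by omega)]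
  have e4 : ∑ i ∈ range (2*n-1), F (qnat n i) = (2*n-1) • F 1 := by
    have : ∀ i ∈ range (2*n-1), F (qnat n i) = F 1 := by
      intro i hi
      rw [mem_range] at hi
      unfold qnat; rw [if_pos hi]
    rw [Finset.sum_congr rfl this, Finset.sum_const, card_range]
  rw [e1, e2, e3, e4]; abel

lemma sum_qnat_val {n : ℕ} (hn : 1 ≤ n) :
    ∑ i : Fin (2*n+2), qnat n (i:ℕ) = 30*n - 1 := by
  rw [sum_qnat hn (fun q => q)]; simp only [smul_eq_mul]; omega

lemma sum_qvec_int {n : ℕ} (hn : 1 ≤ n) :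
    ∑ i : Fin (2*n+2), qvec n i = 30*(n:ℤ) - 1 := by
  have : ∀ i : Fin (2*n+2), qvec n i = ((qnat n (i:ℕ) : ℤ)) := fun i => (qnat_cast i).symm
  rw [Finset.sum_congr rfl (fun i _ => this i), ← Nat.cast_sum, sum_qnat_val hn]
  have h : (1:ℕ) ≤ 30*n := by omega
  push_cast [h]
  ring

lemma sum_qvec_real {n : ℕ} (hn : 1 ≤ n) :
    ∑ i : Fin (2*n+2), (qvec n i : ℝ) = 30*(n:ℝ) - 1 := by
  have := sum_qvec_int hn
  have h2 : ((∑ i : Fin (2*n+2), qvec n i : ℤ) : ℝ) = ((30*(n:ℤ) - 1 : ℤ) : ℝ) := by rw [this]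
  push_cast at h2
  convert h2 using 2

/-- closed form of the sum of floors -/
def Sf (n B : ℕ) : ℕ := (2*n-1) * (B / (30*n)) + B/10 + B/3 + B/2

def hh (n B : ℕ) : ℕ := B - Sf n B

lemma Sf_spec {n : ℕ} (hn : 1 ≤ n) (B : ℕ) :
    ∑ i : Fin (2*n+2), B * qnat n (i:ℕ) / (30*n) = Sf n B := by
  rw [sum_qnat hn (fun q => B * q / (30*n))]
  have c1 : B * 1 / (30*n) = B / (30*n) := by rw [mul_one]
  have c2 : B * (3*n) / (30*n) = B / 10 := by
    rw [show (30*n) = 10*(3*n) by ring, show B*(3*n) = (3*n)*B by ring,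
      show 10*(3*n) = (3*n)*10 by ring, Nat.mul_div_mul_left _ _ (by omega)]
  have c3 : B * (10*n) / (30*n) = B / 3 := by
    rw [show (30*n) = 3*(10*n) by ring, show B*(10*n) = (10*n)*B by ring,
      show 3*(10*n) = (10*n)*3 by ring, Nat.mul_div_mul_left _ _ (by omega)]
  have c4 : B * (15*n) / (30*n) = B / 2 := by
    rw [show (30*n) = 2*(15*n) by ring, show B*(15*n) = (15*n)*B by ring,
      show 2*(15*n) = (15*n)*2 by ring, Nat.mul_div_mul_left _ _ (by omega)]
  rw [c1, c2, c3, c4]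
  unfold Sf
  simp only [smul_eq_mul]
  ring

lemma Sf_le {n : ℕ} (hn : 1 ≤ n) (B : ℕ) : Sf n B ≤ B := by
  unfold Sf
  set k := B / (30*n) with hk
  have h30 : 30*n*k ≤ B := Nat.div_mul_le_self B (30*n) |>.trans_eq' (by rw [hk]; ring) |>.trans (le_refl _)
  have hA : (2*n-1)*k ≤ 2*(n*k) := by
    calc (2*n-1)*k ≤ (2*n)*k := Nat.mul_le_mul_right k (by omega)
    _ = 2*(n*k) := by ring
  have h30' : 30*(n*k) ≤ B := by calc 30*(n*k) = 30*n*k := by ring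
                                   _ ≤ B := h30
  omega

end S5
namespace S5

lemma hh_succ30 {n : ℕ} (hn : 1 ≤ n) (B : ℕ) : hh n (B + 30*n) = hh n B + 1 := by
  unfold hh Sf
  have d1 : (B + 30*n) / (30*n) = B/(30*n) + 1 := Nat.add_div_right B (by omega)
  have d2 : (B + 30*n) / 10 = B/10 + 3*n := by
    rw [show B + 30*n = B + (3*n)*10 by ring, Nat.add_mul_div_right _ _ (by omega)]
  have d3 : (B + 30*n) / 3 = B/3 + 10*n := by
    rw [show B + 30*n = B + (10*n)*3 by ring, Nat.add_mul_div_right _ _ (by omega)]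
  have d4 : (B + 30*n) / 2 = B/2 + 15*n := by
    rw [show B + 30*n = B + (15*n)*2 by ring, Nat.add_mul_div_right _ _ (by omega)]
  rw [d1, d2, d3, d4]
  set k := B / (30*n) with hk
  have h30 : 30*n*k ≤ B := by
    rw [hk]; exact (Nat.div_mul_le_self B (30*n)).trans_eq' (by ring)
  have hA : (2*n-1)*k ≤ 2*(n*k) := by
    calc (2*n-1)*k ≤ (2*n)*k := Nat.mul_le_mul_right k (by omega)
    _ = 2*(n*k) := by ring
  have h30' : 30*(n*k) ≤ B := by calc 30*(n*k) = 30*n*k := by ring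
                                  _ ≤ B := h30
  have exp : (2*n-1)*(k+1) = (2*n-1)*k + (2*n-1) := by ring
  omega

lemma hh_add_mul {n : ℕ} (hn : 1 ≤ n) (B k : ℕ) : hh n (B + 30*n*k) = hh n B + k := by
  induction k with
  | zero => simp
  | succ k ih =>
    have : B + 30*n*(k+1) = (B + 30*n*k) + 30*n := by ring
    rw [this, hh_succ30 hn, ih]; ring

def h0 (b : ℕ) : ℕ := b - b/10 - b/3 - b/2

lemma hh_small {n : ℕ} (hn : 1 ≤ n) {b0 j : ℕ} (hb : b0 < 30) (hj : j < n) :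
    hh n (b0 + 30*j) = h0 b0 + 2*j := by
  unfold hh Sf h0
  have hlt : b0 + 30*j < 30*n := by omega
  rw [Nat.div_eq_of_lt hlt, Nat.mul_zero]
  omega

lemma hh_mod {n : ℕ} (hn : 1 ≤ n) (B : ℕ) :
    hh n B = hh n (B % (30*n)) + B / (30*n) := by
  conv_lhs => rw [← Nat.mod_add_div B (30*n)]
  exact hh_add_mul hn _ _

lemma hh_bound {n : ℕ} (hn : 1 ≤ n) (B : ℕ) : B < 30*n*(hh n B + 1) := by
  have h := hh_mod hn B
  have h2 : B % (30*n) < 30*n := Nat.mod_lt _ (by omega)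
  have h3 : B = B % (30*n) + 30*n*(B/(30*n)) := (Nat.mod_add_div B (30*n)).symm
  have h4 : B / (30*n) ≤ hh n B := by omega
  calc B = B % (30*n) + 30*n*(B/(30*n)) := h3
  _ < 30*n + 30*n*(B/(30*n)) := by omega
  _ = 30*n*(B/(30*n) + 1) := by ring
  _ ≤ 30*n*(hh n B + 1) := Nat.mul_le_mul_left _ (by omega)

end S5
open Finset
namespace S5

def fib (n u : ℕ) : ℕ := ((range (30*n)).filter (fun b => hh n b ≤ u)).card

def gnat (w : ℕ) : ℕ := ((range 30).filter (fun b0 => h0 b0 ≤ w)).card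

lemma card_filter_range_mul (m : ℕ) (p : ℕ → Prop) [DecidablePred p] :
    ((range (30*m)).filter p).card
      = ∑ j ∈ range m, ((range 30).filter (fun b0 => p (30*j + b0))).card := by
  induction m with
  | zero => simp
  | succ m ih =>
    have h : 30*(m+1) = 30*m + 30 := by ring
    rw [h, range_add, filter_union, card_union_of_disjoint, ih, sum_range_succ]
    · congr 1
      rw [filter_map, card_map]
      rfl
    · refine disjoint_filter_filter ?_
      simp only [disjoint_left, mem_range, mem_map, addLeftEmbedding_apply]
      rintro x hx ⟨y, hy, rfl⟩
      omega

lemma fib_eq_sum {n : ℕ} (hn : 1 ≤ n) (t : ℕ) :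
    fib n t = ∑ j ∈ range n, (if 2*j ≤ t then gnat (t - 2*j) else 0) := by
  unfold fib
  rw [card_filter_range_mul n (fun b => hh n b ≤ t)]
  refine Finset.sum_congr rfl ?_
  intro j hj
  rw [mem_range] at hj
  have key : ∀ b0 ∈ range 30, (hh n (30*j + b0) ≤ t) = (h0 b0 + 2*j ≤ t) := by
    intro b0 hb0
    rw [mem_range] at hb0
    rw [show 30*j + b0 = b0 + 30*j by ring, hh_small hn hb0 hj]
  rw [filter_congr (fun b0 hb0 => by rw [key b0 hb0])]
  by_cases h2j : 2*j ≤ t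
  · rw [if_pos h2j]
    unfold gnat
    congr 1
    apply filter_congr
    intro b0 _
    omega
  · rw [if_neg h2j]
    rw [filter_false_of_mem, card_empty]
    intro b0 _
    omega

lemma h0_le_four : ∀ b0 < 30, h0 b0 ≤ 4 := by decide

lemma gnat_val (w : ℕ) :
    gnat w = (if 0 ≤ w then 1 else 0) + 7 * (if 1 ≤ w then 1 else 0)
      + 14 * (if 2 ≤ w then 1 else 0) + 7 * (if 3 ≤ w then 1 else 0)
      + (if 4 ≤ w then 1 else 0) := by
  match w with
  | 0 => decide
  | 1 => decide
  | 2 => decide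
  | 3 => decide
  | (k+4) =>
    simp only [Nat.le_add_left, if_pos, if_true, Nat.zero_le, show (1:ℕ) ≤ k+4 by omega,
      show (2:ℕ) ≤ k+4 by omega, show (3:ℕ) ≤ k+4 by omega, show (4:ℕ) ≤ k+4 by omega]
    unfold gnat
    rw [filter_true_of_mem, card_range]
    intro b0 hb0
    rw [mem_range] at hb0
    have := h0_le_four b0 hb0
    omega

end S5
open Finset
namespace S5

def Bset (n u : ℕ) : Finset ℕ := (range (30*n*(u+1))).filter (fun B => hh n B = u)

lemma card_Bset {n : ℕ} (hn : 1 ≤ n) (u : ℕ) : (Bset n u).card = fib n u := by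
  unfold Bset fib
  apply Finset.card_bij' (fun B _ => B % (30*n)) (fun b _ => b + 30*n*(u - hh n b))
  case hi =>
    intro B hB
    simp only [mem_filter, mem_range] at hB ⊢
    obtain ⟨hB1, hB2⟩ := hB
    have hmd := hh_mod hn B
    refine ⟨Nat.mod_lt _ (by omega), ?_⟩
    obtain ⟨e, he⟩ : ∃ e, B / (30*n) = e := ⟨_, rfl⟩
    rw [he] at hmd
    omega
  case hj =>
    intro b hb
    simp only [mem_filter, mem_range] at hb ⊢
    obtain ⟨hb30, hble⟩ := hb
    have h := hh_add_mul hn b (u - hh n b)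
    constructor
    · have h2 : 30*n*(u - hh n b + 1) = 30*n*(u-hh n b) + 30*n := by ring
      have h3 : 30*n*(u - hh n b + 1) ≤ 30*n*(u+1) := Nat.mul_le_mul_left _ (by omega)
      omega
    · omega
  case left_inv =>
    intro B hB
    simp only [mem_filter, mem_range] at hB
    obtain ⟨hB1, hB2⟩ := hB
    have hmd := hh_mod hn B
    obtain ⟨e, he⟩ : ∃ e, B / (30*n) = e := ⟨_, rfl⟩
    have h3 : B = B % (30*n) + 30*n*e := by rw [← he]; exact (Nat.mod_add_div B (30*n)).symm
    rw [he] at hmd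
    obtain ⟨M, hM⟩ : ∃ M, 30*n*e = M := ⟨_, rfl⟩
    rw [hM] at h3
    have h4 : u - hh n (B % (30*n)) = e := by omega
    rw [h4, hM]
    omega
  case right_inv =>
    intro b hb
    simp only [mem_filter, mem_range] at hb
    rw [Nat.add_mul_mod_self_left]
    exact Nat.mod_eq_of_lt hb.1

end S5
open Finset
namespace S5

def Nd (n v : ℕ) : ℕ := ((univ : Finset (Fin (2*n+2))).finsuppAntidiag v).card

noncomputable def Aset (n v : ℕ) : Finset (Fin (2*n+2) → ℕ) :=
  ((univ : Finset (Fin (2*n+2))).finsuppAntidiag v).image ⇑Finsupp.equivFunOnFinite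

lemma mem_Aset {n v : ℕ} (a : Fin (2*n+2) → ℕ) :
    a ∈ Aset n v ↔ ∑ i, a i = v := by
  unfold Aset
  simp only [mem_image, mem_finsuppAntidiag]
  constructor
  · rintro ⟨l, ⟨hsum, -⟩, rfl⟩
    rw [← hsum]
    rfl
  · intro hsum
    refine ⟨Finsupp.equivFunOnFinite.symm a, ⟨?_, subset_univ _⟩, Equiv.apply_symm_apply _ _⟩
    rw [← hsum]
    exact Finset.sum_congr rfl (fun i _ => rfl)

lemma card_Aset {n v : ℕ} : (Aset n v).card = Nd n v :=
  card_image_of_injective _ (Equiv.injective _)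

noncomputable def Fst (n t : ℕ) : Finset (ℕ × (Fin (2*n+2) → ℕ)) :=
  (Finset.HasAntidiagonal.antidiagonal t).biUnion (fun uv => (Bset n uv.1) ×ˢ (Aset n uv.2))

lemma mem_Fst {n t : ℕ} (hn : 1 ≤ n) (p : ℕ × (Fin (2*n+2) → ℕ)) :
    p ∈ Fst n t ↔ hh n p.1 + ∑ i, p.2 i = t := by
  unfold Fst
  simp only [mem_biUnion, Finset.HasAntidiagonal.mem_antidiagonal, mem_product, Prod.exists]
  constructor
  · rintro ⟨u, v, huv, hB, hA⟩
    unfold Bset at hB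
    simp only [mem_filter, mem_range] at hB
    rw [mem_Aset] at hA
    rw [hB.2, hA]
    exact huv
  · intro h
    refine ⟨hh n p.1, ∑ i, p.2 i, h, ?_, (mem_Aset _).2 rfl⟩
    unfold Bset
    simp only [mem_filter, mem_range]
    exact ⟨hh_bound hn p.1, trivial⟩

lemma card_Fst {n t : ℕ} (hn : 1 ≤ n) :
    (Fst n t).card = ∑ uv ∈ Finset.HasAntidiagonal.antidiagonal t, fib n uv.1 * Nd n uv.2 := by
  unfold Fst
  rw [card_biUnion]
  · refine Finset.sum_congr rfl (fun uv _ => ?_)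
    rw [card_product, card_Bset hn, card_Aset]
  · rintro ⟨u1, v1⟩ h1 ⟨u2, v2⟩ h2 hne
    simp only [Finset.mem_coe, Finset.HasAntidiagonal.mem_antidiagonal] at h1 h2
    rw [Function.onFun, Finset.disjoint_left]
    rintro ⟨B, a⟩ hm1 hm2
    simp only [mem_product] at hm1 hm2
    unfold Bset at hm1 hm2
    simp only [mem_filter, mem_range, mem_Aset] at hm1 hm2
    exact hne (by
      have e1 : u1 = hh n B := hm1.1.2.symm
      have e2 : u2 = hh n B := hm2.1.2.symm
      have e3 : v1 = ∑ i, a i := hm1.2.symm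
      have e4 : v2 = ∑ i, a i := hm2.2.symm
      simp [e1, e2, e3, e4])

end S5
open Finset PowerSeries
namespace S5

noncomputable def Gone : PowerSeries ℤ := PowerSeries.mk (fun _ => 1)

lemma one_sub_X_mul_Gone : ((1 - PowerSeries.X) * Gone : PowerSeries ℤ) = 1 := by
  ext m
  rw [sub_mul, one_mul, map_sub, PowerSeries.coeff_one]
  cases m with
  | zero => simp [Gone]
  | succ k => simp [Gone, PowerSeries.coeff_succ_X_mul]

lemma coeff_Gone_pow (n v : ℕ) :
    PowerSeries.coeff v (Gone ^ (2*n+2)) = (Nd n v : ℤ) := by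
  have h : (Gone ^ (2*n+2) : PowerSeries ℤ) = ∏ _i : Fin (2*n+2), Gone := by
    rw [prod_const, card_univ, Fintype.card_fin]
  rw [h, PowerSeries.coeff_prod]
  unfold Nd
  rw [Finset.card_eq_sum_ones, Nat.cast_sum]
  refine Finset.sum_congr rfl (fun l _ => ?_)
  simp [Gone]

noncomputable def P4 : PowerSeries ℤ :=
  1 + 7 * PowerSeries.X + 14 * PowerSeries.X ^ 2 + 7 * PowerSeries.X ^ 3 + PowerSeries.X ^ 4

def g : ℕ → ℤ := fun w =>
  1 + 7*(if 1 ≤ w then 1 else 0) + 14*(if 2 ≤ w then 1 else 0)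
    + 7*(if 3 ≤ w then 1 else 0) + (if 4 ≤ w then 1 else 0)

lemma GoneP : Gone * P4 = PowerSeries.mk g := by
  have h7 : (7 : PowerSeries ℤ) = PowerSeries.C (7:ℤ) := by
    simp [map_ofNat]
  have h14 : (14 : PowerSeries ℤ) = PowerSeries.C (14:ℤ) := by
    simp [map_ofNat]
  ext w
  have expand : Gone * P4 = Gone + PowerSeries.C (7:ℤ) * (Gone * PowerSeries.X ^ 1)
      + PowerSeries.C (14:ℤ) * (Gone * PowerSeries.X ^ 2)
      + PowerSeries.C (7:ℤ) * (Gone * PowerSeries.X ^ 3) + Gone * PowerSeries.X ^ 4 := by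
    unfold P4
    rw [← h7, ← h14]
    ring
  rw [expand, map_add, map_add, map_add, map_add, coeff_C_mul, coeff_C_mul, coeff_C_mul,
    coeff_mul_X_pow', coeff_mul_X_pow', coeff_mul_X_pow', coeff_mul_X_pow']
  all_goals simp only [Gone, coeff_mk, g]
  all_goals split_ifs <;> norm_num

lemma Gfib_eq {n : ℕ} (hn : 1 ≤ n) :
    (PowerSeries.mk fun t => (fib n t : ℤ))
      = (∑ i ∈ range n, (PowerSeries.X : PowerSeries ℤ)^(2*i)) * (Gone * P4) := by
  rw [GoneP]
  ext t
  rw [PowerSeries.coeff_mk, Finset.sum_mul, map_sum]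
  have hterm : ∀ i, (PowerSeries.coeff t) ((PowerSeries.X:PowerSeries ℤ)^(2*i) * PowerSeries.mk g)
      = if 2*i ≤ t then g (t - 2*i) else 0 := by
    intro i
    rw [mul_comm, coeff_mul_X_pow', ]
    split_ifs with h
    · rw [coeff_mk]
    · rfl
  rw [Finset.sum_congr rfl (fun i _ => hterm i)]
  rw [fib_eq_sum hn t]
  push_cast
  refine Finset.sum_congr rfl (fun j _ => ?_)
  split_ifs with h
  · rw [gnat_val]
    unfold g
    push_cast
    norm_num
  · rfl

end S5
open Finset
namespace S5

lemma mem_deltaQ {n : ℕ} (hn : 1 ≤ n) (y : Fin (2*n+2) → ℝ) :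
    y ∈ deltaQ n ↔ ∃ b : ℝ, 0 ≤ b ∧ (∀ j, 0 ≤ y j + b * (qvec n j : ℝ)) ∧
      (30*(n:ℝ)) * b + ∑ j, y j = 1 := by
  classical
  set e : Fin (2*n+2) → (Fin (2*n+2) → ℝ) :=
    fun i => fun j => if j = i then (1:ℝ) else 0 with he
  set negq : Fin (2*n+2) → ℝ := fun i => -(qvec n i : ℝ) with hnegq
  have hV : deltaQ n = convexHull ℝ (Set.range e ∪ {negq}) := rfl
  constructor
  · intro hy
    rw [hV, _root_.convexHull_eq] at hy
    obtain ⟨ι, t, w, z, hw₀, hw₁, hz, hx⟩ := hy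
    rw [Finset.centerMass_eq_of_sum_1 _ _ hw₁] at hx
    refine ⟨∑ i ∈ t.filter (fun i => z i = negq), w i, ?_, ?_, ?_⟩
    · exact Finset.sum_nonneg (fun i hi => hw₀ i (Finset.mem_filter.1 hi).1)
    · intro j
      have hyj : y j = ∑ i ∈ t, w i * z i j := by
        rw [← hx]
        rw [Finset.sum_apply]
        rfl
      rw [hyj, ← Finset.sum_filter_add_sum_filter_not t (fun i => z i = negq)]
      have h1 : ∑ i ∈ t.filter (fun i => z i = negq), w i * z i j
          = (∑ i ∈ t.filter (fun i => z i = negq), w i) * (-(qvec n j : ℝ)) := by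
        rw [Finset.sum_mul]
        refine Finset.sum_congr rfl (fun i hi => ?_)
        rw [(Finset.mem_filter.1 hi).2]
      rw [h1]
      have h2 : 0 ≤ ∑ i ∈ t.filter (fun i => ¬ z i = negq), w i * z i j := by
        refine Finset.sum_nonneg (fun i hi => ?_)
        obtain ⟨hit, hine⟩ := Finset.mem_filter.1 hi
        have hzi := hz i hit
        rcases hzi with ⟨k, hk⟩ | hq
        · refine mul_nonneg (hw₀ i hit) ?_
          rw [← hk]
          dsimp [e]
          split_ifs <;> norm_num
        · exact absurd hq hine
      nlinarith [h2]
    · have hsy : ∑ j, y j = ∑ i ∈ t, w i * (∑ j, z i j) := by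
        rw [← hx]
        simp only [Finset.sum_apply, Pi.smul_apply, smul_eq_mul]
        rw [Finset.sum_comm]
        simp [Finset.mul_sum]
      have hsplit := Finset.sum_filter_add_sum_filter_not t (fun i => z i = negq)
        (fun i => w i * ∑ j, z i j)
      have hP : ∑ i ∈ t.filter (fun i => z i = negq), w i * (∑ j, z i j)
          = (∑ i ∈ t.filter (fun i => z i = negq), w i) * (-(30*(n:ℝ) - 1)) := by
        rw [Finset.sum_mul]
        refine Finset.sum_congr rfl (fun i hi => ?_)
        rw [(Finset.mem_filter.1 hi).2]
        congr 1
        simp only [hnegq]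
        rw [Finset.sum_neg_distrib, sum_qvec_real hn]
      have hNP : ∑ i ∈ t.filter (fun i => ¬ z i = negq), w i * (∑ j, z i j)
          = ∑ i ∈ t.filter (fun i => ¬ z i = negq), w i := by
        refine Finset.sum_congr rfl (fun i hi => ?_)
        obtain ⟨hit, hine⟩ := Finset.mem_filter.1 hi
        rcases hz i hit with ⟨k, hk⟩ | hq
        · rw [← hk]
          have : ∑ j, e k j = 1 := by
            simp only [he]
            rw [Finset.sum_ite_eq' Finset.univ k (fun _ => (1:ℝ))]
            simp
          rw [this, mul_one]
        · exact absurd hq hine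
      have hw_split := Finset.sum_filter_add_sum_filter_not t (fun i => z i = negq) w
      rw [hsy, ← hsplit, hP, hNP]
      nlinarith [hw_split, hw₁]
  · rintro ⟨b, hb0, hbj, hbs⟩
    rw [hV]
    refine mem_convexHull_of_exists_fintype (ι := Option (Fin (2*n+2)))
      (fun o => Option.elim o b (fun k => y k + b * (qvec n k : ℝ)))
      (fun o => Option.elim o negq e) ?_ ?_ ?_ ?_
    · rintro (_|k)
      · exact hb0
      · exact hbj k
    · rw [Fintype.sum_option]
      simp only [Option.elim]
      rw [Finset.sum_add_distrib, ← Finset.mul_sum, sum_qvec_real hn]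
      ring_nf
      nlinarith [hbs]
    · rintro (_|k)
      · exact Set.mem_union_right _ rfl
      · exact Set.mem_union_left _ ⟨k, rfl⟩
    · funext j
      rw [Fintype.sum_option]
      simp only [Option.elim]
      simp only [Pi.add_apply, Pi.smul_apply, Finset.sum_apply, smul_eq_mul, hnegq, he]
      rw [Finset.sum_congr rfl (fun x _ => by
        rw [mul_ite, mul_one, mul_zero] :
          ∀ x ∈ Finset.univ, (y x + b * (qvec n x : ℝ)) * (if j = x then (1:ℝ) else 0)
            = if j = x then y x + b * (qvec n x : ℝ) else 0)]
      rw [Finset.sum_ite_eq Finset.univ j]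
      simp
      try ring

end S5
open Finset
namespace S5

lemma deltaQ_nonempty {n : ℕ} : (deltaQ n).Nonempty :=
  ⟨_, subset_convexHull ℝ _ (Set.mem_union_right _ rfl)⟩

lemma mem_smul_deltaQ {n : ℕ} (hn : 1 ≤ n) (t : ℕ) (x : Fin (2*n+2) → ℤ) :
    ((fun i => (x i : ℝ)) ∈ (t : ℝ) • deltaQ n) ↔
      ((∑ i, x i ≤ (t:ℤ)) ∧
        ∀ j, 0 ≤ 30*(n:ℤ)*(x j) + ((t:ℤ) - ∑ i, x i) * qvec n j) := by
  rcases Nat.eq_zero_or_pos t with rfl | htpos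
  · rw [Nat.cast_zero, Set.zero_smul_set deltaQ_nonempty]
    simp only [Nat.cast_zero]
    constructor
    · intro h
      have hx0 : ∀ i, x i = 0 := by
        intro i
        have := congrFun h i
        simpa using (Int.cast_injective (α := ℝ) (by simpa using this))
      constructor
      · simp [hx0]
      · intro j; simp [hx0]
    · rintro ⟨h1, h2⟩
      have hsum : ∑ j, (30*(n:ℤ)*(x j) + (0 - ∑ i, x i) * qvec n j)
          = ∑ i, x i := by
        rw [Finset.sum_add_distrib, ← Finset.mul_sum, ← Finset.mul_sum, sum_qvec_int hn]
        ring
      have hS : 0 ≤ ∑ i, x i := by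
        rw [← hsum]
        exact Finset.sum_nonneg (fun j _ => h2 j)
      have hSz : ∑ i, x i = 0 := le_antisymm h1 hS
      have hxj : ∀ j, 0 ≤ x j := by
        intro j
        have := h2 j
        rw [hSz] at this
        simp at this
        nlinarith [this]
      have : ∀ i ∈ Finset.univ, x i = 0 :=
        (Finset.sum_eq_zero_iff_of_nonneg (fun i _ => hxj i)).1 hSz
      have hx0 : (fun i => ((x i : ℤ) : ℝ)) = (0 : Fin (2*n+2) → ℝ) := by
        funext i
        rw [this i (Finset.mem_univ i)]
        simp
      rw [hx0]
      rfl
  · have ht' : (t:ℝ) ≠ 0 := by positivity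
    rw [Set.mem_smul_set_iff_inv_smul_mem₀ ht', mem_deltaQ hn]
    have hyj : ∀ j, ((t:ℝ)⁻¹ • fun i => (x i : ℝ)) j = (t:ℝ)⁻¹ * (x j : ℝ) := by
      intro j; rfl
    have htR : (0:ℝ) < t := by positivity
    constructor
    · rintro ⟨b, hb0, hbj, hbs⟩
      simp only [hyj] at hbj hbs
      have hsum : ∑ j, (t:ℝ)⁻¹ * (x j:ℝ) = (t:ℝ)⁻¹ * ∑ j, (x j:ℝ) := by
        rw [Finset.mul_sum]
      rw [hsum] at hbs
      set S : ℝ := ∑ j, (x j : ℝ) with hSdef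
      have hST : (t:ℝ) - S = 30*n*((t:ℝ)*b) := by
        have := hbs
        field_simp at this
        nlinarith [this]
      constructor
      · have : (0:ℝ) ≤ (t:ℝ) - S := by
          rw [hST]
          positivity
        have hcast : ((∑ i, x i : ℤ) : ℝ) = S := by push_cast; rfl
        have : ((∑ i, x i : ℤ) : ℝ) ≤ ((t:ℤ):ℝ) := by
          rw [hcast]; push_cast; linarith
        exact_mod_cast this
      · intro j
        have key : (0:ℝ) ≤ 30*(n:ℝ)*(x j:ℝ) + ((t:ℝ) - S) * (qvec n j : ℝ) := by
          rw [hST]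
          have h3 : (0:ℝ) ≤ 30*(n:ℝ)*(t:ℝ)*((t:ℝ)⁻¹*(x j:ℝ) + b*(qvec n j:ℝ)) :=
            mul_nonneg (by positivity) (hbj j)
          have h4 : 30*(n:ℝ)*(t:ℝ)*((t:ℝ)⁻¹*(x j:ℝ) + b*(qvec n j:ℝ))
              = 30*(n:ℝ)*(x j:ℝ) + 30*(n:ℝ)*((t:ℝ)*b)*(qvec n j:ℝ) := by
            field_simp
          linarith [h3, h4]
        have hcast : ((30*(n:ℤ)*(x j) + ((t:ℤ) - ∑ i, x i) * qvec n j : ℤ) : ℝ)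
            = 30*(n:ℝ)*(x j:ℝ) + ((t:ℝ) - S) * (qvec n j : ℝ) := by
          push_cast; ring
        have : ((0:ℤ):ℝ) ≤ ((30*(n:ℤ)*(x j) + ((t:ℤ) - ∑ i, x i) * qvec n j : ℤ) : ℝ) := by
          rw [hcast]; simpa using key
        exact_mod_cast this
    · rintro ⟨h1, h2⟩
      set S : ℝ := ∑ j, (x j : ℝ) with hSdef
      have hScast : ((∑ i, x i : ℤ) : ℝ) = S := by push_cast; rfl
      have hnR : (0:ℝ) < 30*(n:ℝ) := by
        have : (1:ℝ) ≤ (n:ℝ) := by exact_mod_cast hn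
        linarith
      refine ⟨((t:ℝ) - S)/(30*(n:ℝ)*(t:ℝ)), ?_, ?_, ?_⟩
      · apply div_nonneg _ (by positivity)
        have : ((∑ i, x i : ℤ) : ℝ) ≤ ((t:ℤ):ℝ) := by exact_mod_cast h1
        rw [hScast] at this
        push_cast at this
        linarith
      · intro j
        rw [hyj]
        have hkey : (0:ℝ) ≤ 30*(n:ℝ)*(x j:ℝ) + ((t:ℝ) - S) * (qvec n j : ℝ) := by
          have := h2 j
          have hc : ((0:ℤ):ℝ) ≤ ((30*(n:ℤ)*(x j) + ((t:ℤ) - ∑ i, x i) * qvec n j : ℤ) : ℝ) := by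
            exact_mod_cast this
          push_cast at hc
          rw [hSdef]
          push_cast
          linarith [hc]
        have heq : (t:ℝ)⁻¹ * (x j:ℝ) + ((t:ℝ) - S)/(30*(n:ℝ)*(t:ℝ)) * (qvec n j : ℝ)
            = (30*(n:ℝ)*(x j:ℝ) + ((t:ℝ) - S) * (qvec n j : ℝ)) / (30*(n:ℝ)*(t:ℝ)) := by
          field_simp
        rw [heq]
        positivity
      · have hsum : ∑ j, ((t:ℝ)⁻¹ • fun i => (x i : ℝ)) j = (t:ℝ)⁻¹ * S := by
          rw [Finset.sum_congr rfl (fun j _ => hyj j), ← Finset.mul_sum]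
        rw [hsum]
        field_simp
        ring

end S5
open Finset
namespace S5

/-- the lattice-point map from `(B, a)` data -/
def Phi (n : ℕ) (p : ℕ × (Fin (2*n+2) → ℕ)) : Fin (2*n+2) → ℤ :=
  fun i => (p.2 i : ℤ) - ((p.1 * qnat n (i:ℕ) / (30*n) : ℕ) : ℤ)

lemma div_bounds {n : ℕ} (hn : 1 ≤ n) (B : ℕ) (i : Fin (2*n+2)) :
    (30*(n:ℤ))*((B * qnat n (i:ℕ) / (30*n) : ℕ) : ℤ) ≤ (B:ℤ) * (qnat n (i:ℕ) : ℤ) ∧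
    (B:ℤ)*(qnat n (i:ℕ) : ℤ) < 30*(n:ℤ)*(((B * qnat n (i:ℕ) / (30*n) : ℕ) : ℤ) + 1) := by
  set E := B * qnat n (i:ℕ) / (30*n) with hE
  set r := B * qnat n (i:ℕ) % (30*n) with hr
  have hmod : 30*n*E + r = B * qnat n (i:ℕ) := Nat.div_add_mod _ _
  have hlt : r < 30*n := Nat.mod_lt _ (by omega)
  have hmodc : 30*(n:ℤ)*(E:ℤ) + (r:ℤ) = (B:ℤ)*(qnat n (i:ℕ):ℤ) := by
    have h := congrArg (Nat.cast : ℕ → ℤ) hmod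
    push_cast at h
    linarith [h]
  have hltc : (r:ℤ) < 30*(n:ℤ) := by exact_mod_cast hlt
  have hr0 : (0:ℤ) ≤ (r:ℤ) := Int.ofNat_nonneg _
  constructor
  · linarith [hmodc]
  · linarith [hmodc, hltc]

lemma sum_floors_cast {n : ℕ} (hn : 1 ≤ n) (B : ℕ) :
    ∑ i : Fin (2*n+2), ((B * qnat n (i:ℕ) / (30*n) : ℕ) : ℤ) = ((Sf n B : ℕ) : ℤ) := by
  rw [← Nat.cast_sum, Sf_spec hn]

lemma hh_cast {n : ℕ} (hn : 1 ≤ n) (B : ℕ) :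
    ((hh n B : ℕ) : ℤ) = (B : ℤ) - ((Sf n B : ℕ) : ℤ) := by
  have := Sf_le hn B
  unfold hh
  omega

lemma set_eq_image {n : ℕ} (hn : 1 ≤ n) (t : ℕ) :
    {x : Fin (2*n+2) → ℤ | (fun i => (x i : ℝ)) ∈ (t : ℝ) • deltaQ n}
      = ↑((Fst n t).image (Phi n)) := by
  have h30 : (0:ℤ) < 30*(n:ℤ) := by positivity
  ext x
  rw [Set.mem_setOf_eq, mem_smul_deltaQ hn t x, Finset.mem_coe, Finset.mem_image]
  constructor
  · rintro ⟨h1, h2⟩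
    set B : ℕ := ((t:ℤ) - ∑ i, x i).toNat with hBdef
    have hB : (B:ℤ) = (t:ℤ) - ∑ i, x i := Int.toNat_of_nonneg (by omega)
    have hai : ∀ i, 0 ≤ x i + ((B * qnat n (i:ℕ) / (30*n) : ℕ) : ℤ) := by
      intro i
      have hq := h2 i
      rw [← hB] at hq
      rw [← qnat_cast i] at hq
      obtain ⟨hd1, hd2⟩ := div_bounds hn B i
      have hpos : 0 < 30*(n:ℤ) * (x i + ((B * qnat n (i:ℕ) / (30*n) : ℕ) : ℤ) + 1) := by
        nlinarith [hq, hd2]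
      by_contra hneg
      push_neg at hneg
      have hle : x i + ((B * qnat n (i:ℕ) / (30*n) : ℕ) : ℤ) + 1 ≤ 0 := by omega
      have : 30*(n:ℤ) * (x i + ((B * qnat n (i:ℕ) / (30*n) : ℕ) : ℤ) + 1) ≤ 0 :=
        mul_nonpos_of_nonneg_of_nonpos h30.le hle
      linarith [hpos]
    refine ⟨(B, fun i => (x i + ((B * qnat n (i:ℕ) / (30*n) : ℕ) : ℤ)).toNat), ?_, ?_⟩
    · rw [mem_Fst hn]
      have hsum : (∑ i, ((x i + ((B * qnat n (i:ℕ) / (30*n) : ℕ) : ℤ)).toNat : ℤ))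
          = ∑ i, x i + ((Sf n B : ℕ) : ℤ) := by
        rw [← sum_floors_cast hn B, ← Finset.sum_add_distrib]
        refine Finset.sum_congr rfl (fun i _ => ?_)
        rw [Int.toNat_of_nonneg (hai i)]
      have hSfle := Sf_le hn B
      have : ((hh n B + ∑ i, (x i + ((B * qnat n (i:ℕ) / (30*n) : ℕ) : ℤ)).toNat : ℕ) : ℤ)
          = (t : ℤ) := by
        rw [Nat.cast_add, hh_cast hn B, Nat.cast_sum, hsum]
        omega
      exact_mod_cast this
    · funext i
      show ((x i + ((B * qnat n (i:ℕ) / (30*n) : ℕ) : ℤ)).toNat : ℤ)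
          - ((B * qnat n (i:ℕ) / (30*n) : ℕ) : ℤ) = x i
      rw [Int.toNat_of_nonneg (hai i)]
      ring
  · rintro ⟨⟨B, a⟩, hmem, rfl⟩
    rw [mem_Fst hn] at hmem
    simp only at hmem
    have hSfle := Sf_le hn B
    have hsum : ∑ i, Phi n (B, a) i = (∑ i, (a i:ℤ)) - ((Sf n B : ℕ) : ℤ) := by
      unfold Phi
      rw [← sum_floors_cast hn B, ← Finset.sum_sub_distrib]
    have hsum2 : ((t:ℤ)) - ∑ i, Phi n (B, a) i = (B:ℤ) := by
      rw [hsum]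
      have : ((hh n B : ℕ):ℤ) + ∑ i, (a i:ℤ) = (t:ℤ) := by
        rw [← Nat.cast_sum, ← Nat.cast_add]
        exact_mod_cast congrArg (Nat.cast : ℕ → ℤ) hmem
      rw [hh_cast hn B] at this
      omega
    constructor
    · omega
    · intro j
      rw [hsum2, ← qnat_cast j]
      obtain ⟨hd1, hd2⟩ := div_bounds hn B j
      unfold Phi
      have ha0 : (0:ℤ) ≤ (a j : ℤ) := Int.ofNat_nonneg _
      nlinarith [hd1, ha0]

end S5
open Finset
namespace S5

lemma t_sub_sum_Phi {n : ℕ} (hn : 1 ≤ n) {t : ℕ} {p : ℕ × (Fin (2*n+2) → ℕ)}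
    (hp : p ∈ Fst n t) : (t:ℤ) - ∑ i, Phi n p i = (p.1 : ℤ) := by
  rw [mem_Fst hn] at hp
  have hSfle := Sf_le hn p.1
  have hsum : ∑ i, Phi n p i = (∑ i, (p.2 i:ℤ)) - ((Sf n p.1 : ℕ) : ℤ) := by
    unfold Phi
    rw [← sum_floors_cast hn p.1, ← Finset.sum_sub_distrib]
  rw [hsum]
  have hc : ((hh n p.1 : ℕ):ℤ) + ∑ i, (p.2 i:ℤ) = (t:ℤ) := by
    rw [← Nat.cast_sum, ← Nat.cast_add]
    exact_mod_cast congrArg (Nat.cast : ℕ → ℤ) hp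
  rw [hh_cast hn p.1] at hc
  omega

lemma Phi_injOn {n : ℕ} (hn : 1 ≤ n) (t : ℕ) : Set.InjOn (Phi n) ↑(Fst n t) := by
  rintro p hp p' hp' heq
  rw [Finset.mem_coe] at hp hp'
  have h1 := t_sub_sum_Phi hn hp
  have h2 := t_sub_sum_Phi hn hp'
  rw [heq] at h1
  have hB : p.1 = p'.1 := by
    have : (p.1 : ℤ) = (p'.1 : ℤ) := by rw [← h1, ← h2]
    exact_mod_cast this
  have ha : p.2 = p'.2 := by
    funext i
    have := congrFun heq i
    unfold Phi at this
    rw [hB] at this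
    have : (p.2 i : ℤ) = (p'.2 i : ℤ) := by omega
    exact_mod_cast this
  exact Prod.ext hB ha

lemma ncard_val {n : ℕ} (hn : 1 ≤ n) (t : ℕ) :
    {x : Fin (2*n+2) → ℤ | (fun i => (x i : ℝ)) ∈ (t : ℝ) • deltaQ n}.ncard
      = (Fst n t).card := by
  rw [set_eq_image hn t, Set.ncard_coe_finset, Finset.card_image_of_injOn (Phi_injOn hn t)]

end S5

open S5 PowerSeries

theorem stmt5 (n : ℕ) (hn : 2 ≤ n) :
    (1 - PowerSeries.X : PowerSeries ℤ) ^ (2 * n + 3) * ehrhartSeries (deltaQ n) =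
      (∑ i ∈ Finset.range n, (PowerSeries.X : PowerSeries ℤ) ^ (2 * i)) *
        (1 + 7 * PowerSeries.X + 14 * PowerSeries.X ^ 2 + 7 * PowerSeries.X ^ 3 +
          PowerSeries.X ^ 4) := by
  have hn1 : 1 ≤ n := by omega
  have hE : ehrhartSeries (deltaQ n) = PowerSeries.mk (fun t => ((Fst n t).card : ℤ)) := by
    unfold ehrhartSeries
    ext t
    rw [PowerSeries.coeff_mk, PowerSeries.coeff_mk, ncard_val hn1 t]
  have hE2 : ehrhartSeries (deltaQ n)
      = (PowerSeries.mk fun t => (fib n t : ℤ)) * Gone^(2*n+2) := by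
    rw [hE]
    ext t
    rw [coeff_mk, PowerSeries.coeff_mul, card_Fst hn1]
    push_cast
    refine Finset.sum_congr rfl (fun uv _ => ?_)
    rw [coeff_mk, coeff_Gone_pow]
  rw [hE2, Gfib_eq hn1]
  have key : ((1 - PowerSeries.X : PowerSeries ℤ)) ^ (2*n+3)
        * ((∑ i ∈ Finset.range n, (PowerSeries.X : PowerSeries ℤ)^(2*i)) * (Gone * P4)
            * Gone^(2*n+2))
      = ((∑ i ∈ Finset.range n, (PowerSeries.X : PowerSeries ℤ)^(2*i)) * P4)
        * (((1 - PowerSeries.X) * Gone)^(2*n+2) * ((1 - PowerSeries.X) * Gone)) := by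
    rw [mul_pow]
    ring
  rw [key, one_sub_X_mul_Gone, one_pow, one_mul, mul_one]
  rfl
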